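/- Let X ∈ ℝ^{n×d}, y ∈ ℝ^n, A = [X y] ∈ ℝ^{n×(d+1)}, and let Q ∈ ℝ^{(d+1)×(d+1)} satisfy QᵀQ = AᵀA. Let c ≥ 0 and = [A; c·Q]. Let S ∈ ℝ^{r×(n+d+1)} and 0 < μ < 1, and assume that for every v ∈ ℝ^{d+1}, (1−μ)‖Âv‖₂² ≤ ‖SÂv‖₂² ≤ (1+μ)‖Âv‖₂². If β ∈ ℝ^d minimizes the sketched objective β̃ ↦ ‖SÂβ̃₋₁‖₂, then: (i) for every β̃ ∈ ℝ^d, ‖SÂβ₋₁‖₂² ≤ (1+μ)(1+c²)·‖Xβ̃ − y‖₂², and (ii) for every β̃ ∈ ℝ^d, ‖Xβ − y‖₂² ≤ ((1+μ)/(1−μ))·‖Xβ̃ − y‖₂², i.e., solving the regression problem on the private sketch SÂ is equivalent to approximately solving an unregularized least-squares problem. -/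

import Mathlib

open Matrix BigOperators

/-- Squared Euclidean norm of a vector. -/
def euclNormSq {ι : Type*} [Fintype ι] (v : ι → ℝ) : ℝ := ∑ i, (v i) ^ 2

/-- Euclidean norm of a vector. -/
noncomputable def euclNorm {ι : Type*} [Fintype ι] (v : ι → ℝ) : ℝ :=
  Real.sqrt (∑ i, (v i) ^ 2)

lemma euclNormSq_nonneg {ι : Type*} [Fintype ι] (v : ι → ℝ) : 0 ≤ euclNormSq v :=
  Finset.sum_nonneg fun _ _ => sq_nonneg _

lemma euclNormSq_eq_dot {ι : Type*} [Fintype ι] (v : ι → ℝ) :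
    euclNormSq v = v ⬝ᵥ v := by
  simp [euclNormSq, dotProduct, sq]

lemma euclNorm_sq {ι : Type*} [Fintype ι] (v : ι → ℝ) :
    euclNorm v ^ 2 = euclNormSq v := by
  rw [euclNorm, Real.sq_sqrt]
  · rfl
  · exact Finset.sum_nonneg fun _ _ => sq_nonneg _

lemma normSq_mulVec_eq {ι κ : Type*} [Fintype ι] [Fintype κ] (M : Matrix ι κ ℝ)
    (v : κ → ℝ) : euclNormSq (M.mulVec v) = v ⬝ᵥ (Mᵀ * M).mulVec v := by
  rw [euclNormSq_eq_dot, ← mulVec_mulVec]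
  conv_rhs => rw [dotProduct_mulVec, vecMul_transpose]

lemma normSq_fromRows {ι₁ ι₂ κ : Type*} [Fintype ι₁] [Fintype ι₂] [Fintype κ]
    (A : Matrix ι₁ κ ℝ) (Q : Matrix ι₂ κ ℝ) (c : ℝ) (v : κ → ℝ) :
    euclNormSq ((Matrix.fromRows A (c • Q)).mulVec v) =
      euclNormSq (A.mulVec v) + c ^ 2 * euclNormSq (Q.mulVec v) := by
  simp only [euclNormSq, Fintype.sum_sum_type, Matrix.fromRows, mulVec, dotProduct,
    Matrix.smul_apply, smul_eq_mul, Finset.mul_sum, Matrix.of_apply, Sum.elim_inl, Sum.elim_inr]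
  congr 1
  refine Finset.sum_congr rfl fun a _ => ?_
  change (∑ i, (c * Q a i) * v i) ^ 2 = _
  simp_rw [mul_assoc, ← Finset.mul_sum, mul_pow]

/-- When `QᵀQ = AᵀA` and `Â = [A; c·Q]`, solving least squares on a sketch `SÂ` of the
augmented matrix is equivalent to approximately solving the *unregularized* problem:
(i) the sketched optimum value is at most `(1+μ)(1+c²)` times any original objective
value, and (ii) the sketched minimizer is a `((1+μ)/(1−μ))`-approximate minimizer of
`β̃ ↦ ‖X β̃ − y‖₂²`. -/
theorem stmt6 {n d r : ℕ} (X : Matrix (Fin n) (Fin d) ℝ) (y : Fin n → ℝ)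
    (A : Matrix (Fin n) (Fin d ⊕ Unit) ℝ)
    (hA : A = fun i => Sum.elim (X i) (fun _ => y i))
    (Q : Matrix (Fin d ⊕ Unit) (Fin d ⊕ Unit) ℝ)
    (hQ : Qᵀ * Q = Aᵀ * A) (c : ℝ) (hc : 0 ≤ c)
    (Ahat : Matrix (Fin n ⊕ (Fin d ⊕ Unit)) (Fin d ⊕ Unit) ℝ)
    (hAhat : Ahat = Matrix.fromRows A (c • Q))
    (S : Matrix (Fin r) (Fin n ⊕ (Fin d ⊕ Unit)) ℝ) (μ : ℝ) (hμ0 : 0 < μ) (hμ1 : μ < 1)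
    (hembed : ∀ v : Fin d ⊕ Unit → ℝ,
      (1 - μ) * euclNormSq (Ahat.mulVec v) ≤ euclNormSq ((S * Ahat).mulVec v) ∧
      euclNormSq ((S * Ahat).mulVec v) ≤ (1 + μ) * euclNormSq (Ahat.mulVec v))
    (β : Fin d → ℝ)
    (hmin : ∀ βt : Fin d → ℝ,
      euclNorm ((S * Ahat).mulVec (Sum.elim β fun _ => -1)) ≤
        euclNorm ((S * Ahat).mulVec (Sum.elim βt fun _ => -1))) :
    (∀ βt : Fin d → ℝ,
      euclNormSq ((S * Ahat).mulVec (Sum.elim β fun _ => -1)) ≤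
        (1 + μ) * (1 + c ^ 2) * euclNormSq (X.mulVec βt - y)) ∧
    (∀ βt : Fin d → ℝ,
      euclNormSq (X.mulVec β - y) ≤
        ((1 + μ) / (1 - μ)) * euclNormSq (X.mulVec βt - y)) := by
  -- ‖Qv‖² = ‖Av‖²
  have hQA : ∀ v : Fin d ⊕ Unit → ℝ,
      euclNormSq (Q.mulVec v) = euclNormSq (A.mulVec v) := by
    intro v
    rw [normSq_mulVec_eq, normSq_mulVec_eq, hQ]
  -- ‖Âv‖² = (1+c²)‖Av‖²
  have hAhatNorm : ∀ v : Fin d ⊕ Unit → ℝ,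
      euclNormSq (Ahat.mulVec v) = (1 + c ^ 2) * euclNormSq (A.mulVec v) := by
    intro v
    rw [hAhat, normSq_fromRows, hQA]; ring
  -- A (β̃, -1) = Xβ̃ - y
  have hAv : ∀ βt : Fin d → ℝ,
      A.mulVec (Sum.elim βt fun _ => -1) = X.mulVec βt - y := by
    intro βt
    funext i
    simp [hA, mulVec, dotProduct, Fintype.sum_sum_type, sub_eq_add_neg]
  -- squared version of minimality
  have hminSq : ∀ βt : Fin d → ℝ,
      euclNormSq ((S * Ahat).mulVec (Sum.elim β fun _ => -1)) ≤
        euclNormSq ((S * Ahat).mulVec (Sum.elim βt fun _ => -1)) := by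
    intro βt
    rw [← euclNorm_sq, ← euclNorm_sq]
    exact pow_le_pow_left₀ (Real.sqrt_nonneg _) (hmin βt) 2
  have part1 : ∀ βt : Fin d → ℝ,
      euclNormSq ((S * Ahat).mulVec (Sum.elim β fun _ => -1)) ≤
        (1 + μ) * (1 + c ^ 2) * euclNormSq (X.mulVec βt - y) := by
    intro βt
    calc euclNormSq ((S * Ahat).mulVec (Sum.elim β fun _ => -1))
        ≤ euclNormSq ((S * Ahat).mulVec (Sum.elim βt fun _ => -1)) := hminSq βt
      _ ≤ (1 + μ) * euclNormSq (Ahat.mulVec (Sum.elim βt fun _ => -1)) :=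
          (hembed _).2
      _ = (1 + μ) * (1 + c ^ 2) * euclNormSq (X.mulVec βt - y) := by
          rw [hAhatNorm, ← hAv βt]; ring
  refine ⟨part1, fun βt => ?_⟩
  have hlow := (hembed (Sum.elim β fun _ => -1)).1
  rw [hAhatNorm, hAv β] at hlow
  have h1c : (0:ℝ) < 1 + c ^ 2 := by positivity
  have h1μ : (0:ℝ) < 1 - μ := by linarith
  have key : (1 - μ) * ((1 + c ^ 2) * euclNormSq (X.mulVec β - y)) ≤
      (1 + μ) * (1 + c ^ 2) * euclNormSq (X.mulVec βt - y) :=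
    le_trans hlow (part1 βt)
  rw [div_mul_eq_mul_div, le_div_iff₀ h1μ]
  nlinarith [key]
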